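/- Fix α > 0, σ > 0, ε > 0, N ∈ ℕ (N ≥ 1), and w_0 ∈ ℝ with |w_0| > ε. Then the noisy sign dynamics (w_n) started at w_0 satisfies P(T_ε ≤ N) ≤ 2·N·ε/(α·σ·√(2π)), where T_ε = inf{n ≥ 0 : |w_n| ≤ ε}. Consequently P(T_ε > N) → 1 as σ → ∞. The key step is that for each k ≥ 1, almost surely P(|w_k| ≤ ε | ℱ_{k−1}) ≤ 2ε/(α·σ·√(2π)), since conditionally on ℱ_{k−1} the iterate w_k is Gaussian with standard deviation ασ. -/

import Mathlib

open MeasureTheory ProbabilityTheory Filter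

/-- The sign function: `1` if `x > 0`, `-1` if `x < 0`, `0` if `x = 0`. -/
noncomputable def sgn (x : ℝ) : ℝ := if 0 < x then 1 else if x < 0 then -1 else 0

lemma sgn_measurable : Measurable sgn := by
  unfold sgn
  exact Measurable.ite (measurableSet_lt measurable_const measurable_id)
    measurable_const
    (Measurable.ite (measurableSet_lt measurable_id measurable_const)
      measurable_const measurable_const)

lemma gauss_pdf_le (x : ℝ) : gaussianPDF 0 1 x ≤ ENNReal.ofReal (Real.sqrt (2 * Real.pi))⁻¹ := by
  rw [gaussianPDF]
  apply ENNReal.ofReal_le_ofReal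
  rw [gaussianPDFReal]
  have h1 : Real.sqrt (2 * Real.pi * ((1 : NNReal) : ℝ)) = Real.sqrt (2 * Real.pi) := by norm_num
  rw [h1]
  have h2 : Real.exp (-(x - 0) ^ 2 / (2 * ((1 : NNReal) : ℝ))) ≤ 1 := by
    rw [Real.exp_le_one_iff]
    push_cast
    nlinarith [sq_nonneg (x - 0)]
  have h3 : (0:ℝ) ≤ (Real.sqrt (2 * Real.pi))⁻¹ := by positivity
  calc (Real.sqrt (2 * Real.pi))⁻¹ * Real.exp (-(x - 0) ^ 2 / (2 * ((1:NNReal):ℝ)))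
      ≤ (Real.sqrt (2 * Real.pi))⁻¹ * 1 := mul_le_mul_of_nonneg_left h2 h3
    _ = _ := mul_one _

lemma gauss_Icc_le (a b : ℝ) :
    gaussianReal 0 1 (Set.Icc a b) ≤ ENNReal.ofReal ((Real.sqrt (2 * Real.pi))⁻¹ * (b - a)) := by
  rw [gaussianReal_apply 0 one_ne_zero]
  calc ∫⁻ x in Set.Icc a b, gaussianPDF 0 1 x
      ≤ ∫⁻ _ in Set.Icc a b, ENNReal.ofReal (Real.sqrt (2 * Real.pi))⁻¹ :=
        lintegral_mono fun x => gauss_pdf_le x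
    _ = ENNReal.ofReal (Real.sqrt (2 * Real.pi))⁻¹ * volume (Set.Icc a b) := by
        rw [setLIntegral_const]
    _ ≤ ENNReal.ofReal ((Real.sqrt (2 * Real.pi))⁻¹ * (b - a)) := by
        rw [Real.volume_Icc, ENNReal.ofReal_mul (by positivity)]

lemma w_prefix {Ω : Type*} (α : ℝ) (ξ : ℕ → Ω → ℝ) (w : ℝ → ℕ → Ω → ℝ) (w0 : ℝ)
    (hw0 : ∀ σ ω, w σ 0 ω = w0)
    (hw : ∀ σ n ω, w σ (n + 1) ω = w σ n ω - α * (sgn (w σ n ω) + σ * ξ (n + 1) ω))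
    (σ : ℝ) (k : ℕ) :
    ∃ F : ((Finset.range (k+1) : Finset ℕ) → ℝ) → ℝ, Measurable F ∧
      ∀ ω, w σ k ω = F (fun i => ξ i.1 ω) := by
  induction k with
  | zero => exact ⟨fun _ => w0, measurable_const, fun ω => hw0 σ ω⟩
  | succ k ih =>
    obtain ⟨F, hF, hFw⟩ := ih
    have hmem : ∀ i : (Finset.range (k+1) : Finset ℕ), i.1 ∈ Finset.range (k+2) := by
      intro i
      have := i.2
      simp only [Finset.mem_range] at this ⊢
      omega
    have hmem' : k + 1 ∈ Finset.range (k+2) := by simp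
    refine ⟨fun v => F (fun i => v ⟨i.1, hmem i⟩) -
      α * (sgn (F (fun i => v ⟨i.1, hmem i⟩)) + σ * v ⟨k+1, hmem'⟩), ?_, ?_⟩
    · have hrestr : Measurable fun (v : (Finset.range (k+2) : Finset ℕ) → ℝ) =>
        F (fun i => v ⟨i.1, hmem i⟩) :=
        hF.comp (measurable_pi_lambda _ fun i => measurable_pi_apply _)
      have heval : Measurable fun (v : (Finset.range (k+2) : Finset ℕ) → ℝ) =>
        v ⟨k+1, hmem'⟩ := measurable_pi_apply _
      exact hrestr.sub ((((sgn_measurable.comp hrestr)).add (heval.const_mul σ)).const_mul α)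
    · intro ω
      rw [hw σ k ω, hFw ω]

lemma key_step {Ω : Type*} [MeasurableSpace Ω] (P : Measure Ω) [IsProbabilityMeasure P]
    (α ε : ℝ) (hα : 0 < α) (hε : 0 < ε)
    (ξ : ℕ → Ω → ℝ) (hξmeas : ∀ n, Measurable (ξ n))
    (hξdist : ∀ n, Measure.map (ξ n) P = gaussianReal 0 1)
    (hξindep : iIndepFun ξ P)
    (w : ℝ → ℕ → Ω → ℝ) (w0 : ℝ)
    (hw0 : ∀ σ ω, w σ 0 ω = w0)
    (hw : ∀ σ n ω, w σ (n + 1) ω = w σ n ω - α * (sgn (w σ n ω) + σ * ξ (n + 1) ω))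
    (σ : ℝ) (hσ : 0 < σ) (k : ℕ) :
    P {ω | |w σ (k+1) ω| ≤ ε}
      ≤ ENNReal.ofReal (2 * ε / (α * σ * Real.sqrt (2 * Real.pi))) := by
  obtain ⟨F, hF, hFw⟩ := w_prefix α ξ w w0 hw0 hw σ k
  set c : ℝ := α * σ with hc
  have hcpos : 0 < c := mul_pos hα hσ
  set G : ((Finset.range (k+1) : Finset ℕ) → ℝ) → ℝ := fun v => F v - α * sgn (F v) with hG
  have hGmeas : Measurable G := hF.sub ((sgn_measurable.comp hF).const_mul α)
  set g : Ω → ℝ := fun ω => G (fun i => ξ i.1 ω) with hg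
  have hgmeas : Measurable g :=
    hGmeas.comp (measurable_pi_lambda _ fun i => hξmeas _)
  have hdisj : Disjoint (Finset.range (k+1)) ({k+1} : Finset ℕ) := by
    simp [Finset.disjoint_singleton_right, Finset.mem_range]
  have hindep0 := hξindep.indepFun_finset (Finset.range (k+1)) {k+1} hdisj hξmeas
  have hmem1 : k + 1 ∈ ({k+1} : Finset ℕ) := Finset.mem_singleton_self _
  have hindep : IndepFun g (ξ (k+1)) P := by
    have := hindep0.comp hGmeas
      (measurable_pi_apply (⟨k+1, hmem1⟩ : (({k+1} : Finset ℕ) : Finset ℕ)))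
    exact this
  have hev : {ω | |w σ (k+1) ω| ≤ ε}
      = (fun ω => (g ω, ξ (k+1) ω)) ⁻¹' {p : ℝ × ℝ | |p.1 - c * p.2| ≤ ε} := by
    ext ω
    simp only [Set.mem_setOf_eq, Set.mem_preimage]
    rw [hw σ k ω, hFw ω]
    constructor <;> intro h <;> [skip; skip] <;>
      · convert h using 2
        simp only [hg, hG, hc]
        ring
  have hS : MeasurableSet {p : ℝ × ℝ | |p.1 - c * p.2| ≤ ε} :=
    measurableSet_le (measurable_fst.sub (measurable_snd.const_mul c)).abs measurable_const
  rw [hev, ← Measure.map_apply (hgmeas.prodMk (hξmeas _)) hS]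
  rw [(indepFun_iff_map_prod_eq_prod_map_map hgmeas.aemeasurable
    (hξmeas _).aemeasurable).mp hindep]
  rw [Measure.prod_apply hS, hξdist]
  have hsec : ∀ x : ℝ, {y : ℝ | (x, y) ∈ {p : ℝ × ℝ | |p.1 - c * p.2| ≤ ε}}
      = Set.Icc ((x - ε)/c) ((x + ε)/c) := by
    intro x
    ext y
    simp only [Set.mem_setOf_eq, Set.mem_Icc, abs_le]
    rw [div_le_iff₀ hcpos, le_div_iff₀ hcpos]
    constructor <;> intro h <;> constructor <;> nlinarith [h.1, h.2]
  have hb : ∀ x : ℝ, gaussianReal 0 1 {y : ℝ | (x, y) ∈ {p : ℝ × ℝ | |p.1 - c * p.2| ≤ ε}}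
      ≤ ENNReal.ofReal (2 * ε / (c * Real.sqrt (2 * Real.pi))) := by
    intro x
    rw [hsec x]
    refine (gauss_Icc_le _ _).trans (le_of_eq ?_)
    congr 1
    have h2 : (x + ε)/c - (x - ε)/c = 2 * ε / c := by field_simp; ring
    rw [h2]
    have hs : Real.sqrt (2 * Real.pi) ≠ 0 := by positivity
    field_simp
  calc ∫⁻ x, gaussianReal 0 1 {y : ℝ | (x, y) ∈ {p : ℝ × ℝ | |p.1 - c * p.2| ≤ ε}} ∂(P.map g)
      ≤ ∫⁻ _, ENNReal.ofReal (2 * ε / (c * Real.sqrt (2 * Real.pi))) ∂(P.map g) :=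
        lintegral_mono hb
    _ = ENNReal.ofReal (2 * ε / (c * Real.sqrt (2 * Real.pi))) := by
        have : IsProbabilityMeasure (P.map g)  := Measure.isProbabilityMeasure_map hgmeas.aemeasurable
        simp

/-- Large-noise regime: for `|w0| > ε`, the noisy sign dynamics `w σ` started at `w0`
(driven by i.i.d. standard Gaussians) satisfies
`P(T_ε ≤ N) ≤ 2 N ε / (α σ √(2π))` for every `σ > 0`; consequently
`P(T_ε > N) → 1` as `σ → ∞`. -/
theorem noisy_sign_dynamics_large_noise
    {Ω : Type*} [MeasurableSpace Ω] (P : Measure Ω) [IsProbabilityMeasure P]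
    (α ε : ℝ) (hα : 0 < α) (hε : 0 < ε)
    (N : ℕ) (hN : 1 ≤ N) (w0 : ℝ) (hw0abs : ε < |w0|)
    (ξ : ℕ → Ω → ℝ) (hξmeas : ∀ n, Measurable (ξ n))
    (hξdist : ∀ n, Measure.map (ξ n) P = gaussianReal 0 1)
    (hξindep : iIndepFun ξ P)
    (w : ℝ → ℕ → Ω → ℝ)
    (hw0 : ∀ σ ω, w σ 0 ω = w0)
    (hw : ∀ σ n ω, w σ (n + 1) ω = w σ n ω - α * (sgn (w σ n ω) + σ * ξ (n + 1) ω)) :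
    (∀ σ : ℝ, 0 < σ →
      P {ω | ∃ n ≤ N, |w σ n ω| ≤ ε}
        ≤ ENNReal.ofReal (2 * N * ε / (α * σ * Real.sqrt (2 * Real.pi)))) ∧
    Tendsto (fun σ : ℝ => P {ω | ∀ n ≤ N, ε < |w σ n ω|}) atTop (nhds 1) := by
  have hwmeas : ∀ σ n, Measurable (w σ n) := by
    intro σ n
    induction n with
    | zero =>
      have : w σ 0 = fun _ => w0 := funext (hw0 σ)
      rw [this]; exact measurable_const
    | succ n ih =>
      have : w σ (n+1) = fun ω => w σ n ω - α * (sgn (w σ n ω) + σ * ξ (n+1) ω) :=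
        funext (hw σ n)
      rw [this]
      exact ih.sub (((sgn_measurable.comp ih).add ((hξmeas _).const_mul σ)).const_mul α)
  have part1 : ∀ σ : ℝ, 0 < σ →
      P {ω | ∃ n ≤ N, |w σ n ω| ≤ ε}
        ≤ ENNReal.ofReal (2 * N * ε / (α * σ * Real.sqrt (2 * Real.pi))) := by
    intro σ hσ
    have hsub : {ω | ∃ n ≤ N, |w σ n ω| ≤ ε}
        ⊆ ⋃ k ∈ Finset.range N, {ω | |w σ (k+1) ω| ≤ ε} := by
      intro ω hω
      obtain ⟨n, hnN, hn⟩ := hω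
      match n with
      | 0 =>
        rw [hw0 σ ω] at hn
        exact absurd hn (not_le.mpr hw0abs)
      | (k+1) =>
        exact Set.mem_biUnion (Finset.mem_range.mpr (by omega)) hn
    calc P {ω | ∃ n ≤ N, |w σ n ω| ≤ ε}
        ≤ P (⋃ k ∈ Finset.range N, {ω | |w σ (k+1) ω| ≤ ε}) := measure_mono hsub
      _ ≤ ∑ k ∈ Finset.range N, P {ω | |w σ (k+1) ω| ≤ ε} :=
          measure_biUnion_finset_le _ _
      _ ≤ ∑ _k ∈ Finset.range N,
            ENNReal.ofReal (2 * ε / (α * σ * Real.sqrt (2 * Real.pi))) :=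
          Finset.sum_le_sum fun k _ =>
            key_step P α ε hα hε ξ hξmeas hξdist hξindep w w0 hw0 hw σ hσ k
      _ = (N : ENNReal) * ENNReal.ofReal (2 * ε / (α * σ * Real.sqrt (2 * Real.pi))) := by
          rw [Finset.sum_const, Finset.card_range, nsmul_eq_mul]
      _ = ENNReal.ofReal (2 * N * ε / (α * σ * Real.sqrt (2 * Real.pi))) := by
          rw [← ENNReal.ofReal_natCast N, ← ENNReal.ofReal_mul (Nat.cast_nonneg N)]
          congr 1
          ring
  refine ⟨part1, ?_⟩
  have hAmeas : ∀ σ : ℝ, MeasurableSet {ω | ∃ n ≤ N, |w σ n ω| ≤ ε} := by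
    intro σ
    have : {ω | ∃ n ≤ N, |w σ n ω| ≤ ε} = ⋃ n ∈ {n : ℕ | n ≤ N}, {ω | |w σ n ω| ≤ ε} := by
      ext ω; simp
    rw [this]
    exact MeasurableSet.biUnion (Set.to_countable _)
      fun n _ => measurableSet_le (hwmeas σ n).abs measurable_const
  have hcompl : ∀ σ : ℝ, {ω | ∀ n ≤ N, ε < |w σ n ω|} = {ω | ∃ n ≤ N, |w σ n ω| ≤ ε}ᶜ := by
    intro σ
    ext ω
    simp [not_exists, not_le]
  have heq : (fun σ : ℝ => P {ω | ∀ n ≤ N, ε < |w σ n ω|})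
      = fun σ : ℝ => 1 - P {ω | ∃ n ≤ N, |w σ n ω| ≤ ε} := by
    funext σ
    rw [hcompl σ, measure_compl (hAmeas σ) (measure_ne_top _ _), measure_univ]
  rw [heq]
  -- the bound tends to 0
  have hden : Tendsto (fun σ : ℝ => α * σ * Real.sqrt (2 * Real.pi)) atTop atTop := by
    have h1 : Tendsto (fun σ : ℝ => α * σ) atTop atTop :=
      Tendsto.const_mul_atTop hα tendsto_id
    exact h1.atTop_mul_const (by positivity)
  have hreal : Tendsto (fun σ : ℝ => 2 * N * ε / (α * σ * Real.sqrt (2 * Real.pi)))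
      atTop (nhds 0) := Tendsto.div_atTop tendsto_const_nhds hden
  have hb0 : Tendsto (fun σ : ℝ =>
      ENNReal.ofReal (2 * N * ε / (α * σ * Real.sqrt (2 * Real.pi)))) atTop (nhds 0) := by
    have := ENNReal.tendsto_ofReal hreal
    simpa using this
  apply tendsto_of_tendsto_of_tendsto_of_le_of_le'
    (g := fun σ : ℝ => 1 - ENNReal.ofReal (2 * N * ε / (α * σ * Real.sqrt (2 * Real.pi))))
    (h := fun _ : ℝ => (1 : ENNReal))
  · have : Tendsto (fun σ : ℝ =>
        (1 : ENNReal) - ENNReal.ofReal (2 * N * ε / (α * σ * Real.sqrt (2 * Real.pi))))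
        atTop (nhds (1 - 0)) :=
      ENNReal.Tendsto.sub tendsto_const_nhds hb0 (Or.inl ENNReal.one_ne_top)
    simpa using this
  · exact tendsto_const_nhds
  · filter_upwards [eventually_gt_atTop (0 : ℝ)] with σ hσ
    exact tsub_le_tsub_left (part1 σ hσ) 1
  · filter_upwards with σ
    exact tsub_le_self
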